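/- The CF rate R_CF(S₂) = (1/2)log₂(1+S₁) + (1/2)log₂(1 + S₁ + tS₁S₂/(1+(t+1)S₁+S₂)) is concave on S₂ ∈ [0, ∞). -/

import Mathlib

open Real Set

lemma concaveOn_comp' {g f : ℝ → ℝ} {T s : Set ℝ}
    (hg : ConcaveOn ℝ T g) (hmono : MonotoneOn g T) (hf : ConcaveOn ℝ s f)
    (hmaps : Set.MapsTo f s T) : ConcaveOn ℝ s (fun x => g (f x)) :=
  ⟨hf.1, fun x hx y hy a b ha hb hab =>
    le_trans (hg.2 (hmaps hx) (hmaps hy) ha hb hab)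
      (hmono (hg.1 (hmaps hx) (hmaps hy) ha hb hab)
        (hmaps (hf.1 hx hy ha hb hab)) (hf.2 hx hy ha hb hab))⟩

theorem RCF_concave (S₁ t : ℝ) (hS₁ : 0 < S₁) (ht : 0 < t) :
    ConcaveOn ℝ (Set.Ici 0)
      (fun S₂ : ℝ => (1/2) * Real.logb 2 (1 + S₁)
        + (1/2) * Real.logb 2 (1 + S₁ + t * S₁ * S₂ / (1 + (t + 1) * S₁ + S₂))) := by
  set c : ℝ := 1 + (t + 1) * S₁ with hc_def
  have hc : 0 < c := by nlinarith
  -- the inner function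
  set f : ℝ → ℝ := fun x => 1 + S₁ + t * S₁ + (-(t * S₁ * c)) * (c + x)⁻¹ with hf_def
  have hpos : ∀ x ∈ Ici (0:ℝ), 0 < c + x := fun x hx => by
    have : (0:ℝ) ≤ x := hx
    linarith
  have heq : ∀ x ∈ Ici (0:ℝ),
      1 + S₁ + t * S₁ * x / (1 + (t + 1) * S₁ + x) = f x := by
    intro x hx
    have h := (hpos x hx).ne'
    simp only [hf_def, ← hc_def]
    field_simp
    ring
  -- convexity of x ↦ (c+x)⁻¹ on Ici 0
  have hinv : ConvexOn ℝ (Ici 0) (fun x : ℝ => (c + x)⁻¹) := by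
    have h1 : StrictConvexOn ℝ (Ioi 0) (fun x : ℝ => x ^ (-1 : ℤ)) :=
      strictConvexOn_zpow (by norm_num) (by norm_num)
    have h2 : ConvexOn ℝ (Ioi 0) (fun x : ℝ => x⁻¹) := by
      simpa [zpow_neg_one] using h1.convexOn
    have h3 : ConvexOn ℝ ((fun x : ℝ => c + x) ⁻¹' Ioi 0)
        (fun x : ℝ => (c + x)⁻¹) := h2.translate_right c
    refine h3.subset (fun x hx => ?_) (convex_Ici 0)
    exact mem_preimage.2 (hpos x hx)
  -- concavity of f on Ici 0
  have hf_conc : ConcaveOn ℝ (Ici 0) f := by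
    have h4 : ConvexOn ℝ (Ici 0) (fun x : ℝ => (t * S₁ * c) * (c + x)⁻¹) := by
      have := hinv.smul (c := t * S₁ * c) (by positivity)
      simpa [smul_eq_mul] using this
    have h5 : ConcaveOn ℝ (Ici 0) (fun x : ℝ => (-(t * S₁ * c)) * (c + x)⁻¹) := by
      exact h4.neg.congr (fun x _ => by simp [neg_mul])
    have h6 : ConcaveOn ℝ (Ici 0) (fun _ : ℝ => 1 + S₁ + t * S₁) :=
      concaveOn_const _ (convex_Ici 0)
    exact h6.add h5
  -- f maps into Ioi 0
  have hmaps : Set.MapsTo f (Ici 0) (Ioi 0) := by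
    intro x hx
    rw [← heq x hx]
    have hx0 : (0:ℝ) ≤ x := hx
    have hden := hpos x hx
    have : 0 ≤ t * S₁ * x / (1 + (t + 1) * S₁ + x) := by positivity
    simp only [mem_Ioi]
    linarith
  -- concavity and monotonicity of y ↦ (1/2) * logb 2 y on Ioi 0
  have hlog_conc : ConcaveOn ℝ (Ioi 0) (fun y : ℝ => (1/2) * Real.logb 2 y) := by
    have h7 := strictConcaveOn_log_Ioi.concaveOn.smul
      (c := (1/2) * (Real.log 2)⁻¹) (by positivity)
    have : (fun y : ℝ => (1/2) * Real.logb 2 y)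
        = fun y : ℝ => ((1/2) * (Real.log 2)⁻¹) • Real.log y := by
      funext y
      simp [Real.logb, div_eq_mul_inv, smul_eq_mul]
      ring
    rw [this]
    exact h7
  have hlog_mono : MonotoneOn (fun y : ℝ => (1/2) * Real.logb 2 y) (Ioi 0) := by
    intro x hx y hy hxy
    have := Real.logb_le_logb_of_le (b := 2) (by norm_num) hx hxy
    linarith
  have hcomp : ConcaveOn ℝ (Ici 0)
      (fun x => (1/2) * Real.logb 2 (f x)) :=
    concaveOn_comp' (g := fun y => (1/2) * Real.logb 2 y) (f := f)
      hlog_conc hlog_mono hf_conc hmaps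
  have hconst : ConcaveOn ℝ (Ici 0)
      (fun _ : ℝ => (1/2) * Real.logb 2 (1 + S₁)) :=
    concaveOn_const _ (convex_Ici 0)
  have hsum := hconst.add hcomp
  refine hsum.congr ?_
  intro x hx
  simp only [Pi.add_apply]
  rw [heq x hx]
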